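/- The group Diff_d(1) of d-jets of holomorphic reparametrizations of (ℂ,0) with nonvanishing derivative, acting on d-jets of curves ℂ → ℂⁿ identified with n×d matrices, embeds as a subgroup of the group of invertible upper-triangular d×d matrices: the substitution α₁t + α₂t² + ... + α_d t^d (α₁ ≠ 0) corresponds to the upper-triangular matrix whose (i,j) entry is ∑_{τ ∈ Π[j], |τ|=i} perm(τ) α_τ, where the sum is over partitions τ of j with i parts, α_τ = ∏_{m∈τ} α_m, and perm(τ) is the number of distinct orderings of the parts of τ. In particular the diagonal entries are α₁, α₁², ..., α₁^d. -/

import Mathlib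

/-- The `(i,j)` entry of the matrix associated to a reparametrization jet
`α₁ t + α₂ t² + …`: the sum over all ordered compositions of `j` into `i`
positive parts of the product of the corresponding `α`'s.  This equals
`∑_{τ ∈ Π[j], |τ| = i} perm(τ) α_τ`, the sum over partitions `τ` of `j` with
`i` parts, where `perm(τ)` is the number of distinct orderings of `τ`. -/
noncomputable def substEntry (α : ℕ → ℂ) (i j : ℕ) : ℂ :=
  ∑ f ∈ Finset.univ.filter
      (fun f : Fin i → Fin (j + 1) =>
        (∀ m, 1 ≤ (f m : ℕ)) ∧ (∑ m, (f m : ℕ)) = j),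
    ∏ m, α ((f m : ℕ))

open PowerSeries Finset in
/-- `substEntry α i j` is the `j`-th coefficient of the `i`-th power of the
power series with coefficients `α`, provided `α 0 = 0`. -/
theorem substEntry_eq_coeff_pow (α : ℕ → ℂ) (hα0 : α 0 = 0) (i j : ℕ) :
    substEntry α i j = PowerSeries.coeff j ((PowerSeries.mk α) ^ i) := by
  rw [substEntry, PowerSeries.coeff_pow]
  simp only [PowerSeries.coeff_mk]
  rw [← Finset.sum_filter_add_sum_filter_not (Finset.finsuppAntidiag (range i) j)
      (fun l => ∀ m ∈ range i, 1 ≤ l m)]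
  have h2 : ∑ l ∈ (Finset.finsuppAntidiag (range i) j).filter
      (fun l => ¬ ∀ m ∈ range i, 1 ≤ l m), ∏ m ∈ range i, α (l m) = 0 := by
    apply Finset.sum_eq_zero
    intro l hl
    simp only [Finset.mem_filter, not_forall] at hl
    obtain ⟨m, hm, hm1⟩ := hl.2
    refine Finset.prod_eq_zero hm ?_
    have : l m = 0 := by omega
    rw [this, hα0]
  rw [h2, add_zero]
  refine Finset.sum_bij'
    (i := fun f hf => Finsupp.onFinset (range i)
      (fun k => if h : k < i then ((f ⟨k, h⟩ : ℕ)) else 0)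
      (fun k hk => by by_contra h; simp only [Finset.mem_range] at h; simp [h] at hk))
    (j := fun l hl => fun m => (⟨l m, by
      simp only [Finset.mem_filter, Finset.mem_finsuppAntidiag] at hl
      have hle : l (m : ℕ) ≤ j := hl.1.1 ▸ Finset.single_le_sum
        (f := fun k => l k) (fun k _ => Nat.zero_le _)
        (Finset.mem_range.mpr m.isLt)
      omega⟩ : Fin (j + 1)))
    ?_ ?_ ?_ ?_ ?_
  · intro f hf
    simp only [Finset.mem_filter, Finset.mem_univ, true_and] at hf
    simp only [Finset.mem_filter, Finset.mem_finsuppAntidiag]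
    refine ⟨⟨?_, Finsupp.support_onFinset_subset⟩, ?_⟩
    · calc (range i).sum ⇑(Finsupp.onFinset (range i)
            (fun k => if h : k < i then ((f ⟨k, h⟩ : ℕ)) else 0) _)
          = ∑ k ∈ range i, (fun k => if h : k < i then ((f ⟨k, h⟩ : ℕ)) else 0) k :=
            Finset.sum_congr rfl (fun k _ => Finsupp.onFinset_apply)
        _ = ∑ m : Fin i, (fun k => if h : k < i then ((f ⟨k, h⟩ : ℕ)) else 0) (m : ℕ) :=
            (Fin.sum_univ_eq_sum_range _ i).symm
        _ = j := (Finset.sum_congr rfl (fun m _ => by simp [m.isLt])).trans hf.2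
    · intro m hm
      rw [Finset.mem_range] at hm
      simpa [Finsupp.onFinset_apply, hm] using hf.1 ⟨m, hm⟩
  · intro l hl
    simp only [Finset.mem_filter, Finset.mem_finsuppAntidiag] at hl
    simp only [Finset.mem_filter, Finset.mem_univ, true_and]
    refine ⟨fun m => hl.2 m (Finset.mem_range.mpr m.isLt), ?_⟩
    rw [Fin.sum_univ_eq_sum_range (fun k => l k)]
    exact hl.1.1
  · intro f hf
    funext m
    apply Fin.ext
    simp [Finsupp.onFinset_apply, m.isLt]
  · intro l hl
    simp only [Finset.mem_filter, Finset.mem_finsuppAntidiag] at hl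
    ext k
    simp only [Finsupp.onFinset_apply]
    by_cases hk : k < i
    · simp [hk]
    · simp only [hk, dif_neg, not_false_iff]
      by_contra h
      have : k ∈ l.support := Finsupp.mem_support_iff.mpr (Ne.symm h)
      have := hl.1.2 this
      rw [Finset.mem_range] at this
      omega
  · intro f hf
    calc ∏ m : Fin i, α (f m : ℕ)
        = ∏ m : Fin i, (fun k => α (if h : k < i then ((f ⟨k, h⟩ : ℕ)) else 0)) (m : ℕ) :=
          Finset.prod_congr rfl (fun m _ => by simp [m.isLt])
      _ = ∏ k ∈ range i, (fun k => α (if h : k < i then ((f ⟨k, h⟩ : ℕ)) else 0)) k :=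
          Fin.prod_univ_eq_prod_range
            (fun k => α (if h : k < i then ((f ⟨k, h⟩ : ℕ)) else 0)) i
      _ = _ := Finset.prod_congr rfl (fun k _ => by rw [Finsupp.onFinset_apply])

/-- A power series whose constant coefficient vanishes has `coeff j (B ^ s) = 0`
for `j < s`. -/
theorem coeff_pow_eq_zero_of_lt (B : PowerSeries ℂ)
    (hB : PowerSeries.constantCoeff B = 0)
    {j s : ℕ} (h : j < s) : PowerSeries.coeff j (B ^ s) = 0 := by
  have : (PowerSeries.X : PowerSeries ℂ) ^ s ∣ B ^ s :=
    pow_dvd_pow_of_dvd (PowerSeries.X_dvd_iff.mpr hB) s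
  exact PowerSeries.X_pow_dvd_iff.mp this j h

/-- Multinomial expansion of a power of a finite sum `∑ C (α l) * B ^ l`. -/
theorem sum_C_mul_pow_pow (α : ℕ → ℂ) (d i : ℕ) (B : PowerSeries ℂ) :
    (∑ l ∈ Finset.Icc 1 d, PowerSeries.C (α l) * B ^ l) ^ i
    = ∑ g ∈ Fintype.piFinset (fun _ : Fin i => Finset.Icc 1 d),
        PowerSeries.C (∏ m, α (g m)) * B ^ (∑ m, g m) := by
  rw [show (∑ l ∈ Finset.Icc 1 d, PowerSeries.C (α l) * B ^ l) ^ i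
      = ∏ _m : Fin i, (∑ l ∈ Finset.Icc 1 d, PowerSeries.C (α l) * B ^ l) from by
    rw [Finset.prod_const, Finset.card_univ, Fintype.card_fin]]
  rw [Finset.prod_univ_sum]
  refine Finset.sum_congr rfl (fun g _ => ?_)
  rw [Finset.prod_mul_distrib, map_prod, Finset.prod_pow_eq_pow_sum]

/-- A sequence vanishing at `0` and above `d` gives a "polynomial" power
series supported on `Icc 1 d`. -/
theorem mk_eq_sum_C_mul_X_pow (δ : ℕ → ℂ) (d : ℕ) (h0 : δ 0 = 0)
    (hd : ∀ m, d < m → δ m = 0) :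
    PowerSeries.mk δ
      = ∑ l ∈ Finset.Icc 1 d, PowerSeries.C (δ l) * PowerSeries.X ^ l := by
  ext m
  rw [PowerSeries.coeff_mk, map_sum]
  simp only [PowerSeries.coeff_C_mul, PowerSeries.coeff_X_pow, mul_ite, mul_one, mul_zero]
  rw [Finset.sum_ite_eq (Finset.Icc 1 d) m (fun l => δ l)]
  by_cases hm : m ∈ Finset.Icc 1 d
  · rw [if_pos hm]
  · rw [if_neg hm]
    rw [Finset.mem_Icc] at hm
    rcases Nat.lt_or_ge m 1 with h | h
    · interval_cases m; exact h0
    · exact hd m (by omega)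

theorem substEntry_triangular (α : ℕ → ℂ) (i j : ℕ) (h : j < i) :
    substEntry α i j = 0 := by
  apply Finset.sum_eq_zero
  intro f hf
  simp only [Finset.mem_filter, Finset.mem_univ, true_and] at hf
  exfalso
  have : i ≤ ∑ m, (f m : ℕ) := by
    calc i = ∑ _m : Fin i, 1 := by simp
    _ ≤ ∑ m, (f m : ℕ) := Finset.sum_le_sum (fun m _ => hf.1 m)
  omega

theorem substEntry_diag (α : ℕ → ℂ) (i : ℕ) : substEntry α i i = (α 1) ^ i := by
  rcases Nat.eq_zero_or_pos i with rfl | hi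
  · simp [substEntry]
  · have h1i : 1 < i + 1 := by omega
    rw [substEntry, show (Finset.univ.filter
      (fun f : Fin i → Fin (i + 1) =>
        (∀ m, 1 ≤ (f m : ℕ)) ∧ (∑ m, (f m : ℕ)) = i))
        = {fun _ => (⟨1, h1i⟩ : Fin (i+1))} from ?_]
    · simp
    · ext f
      simp only [Finset.mem_filter, Finset.mem_univ, true_and, Finset.mem_singleton]
      constructor
      · rintro ⟨hall, hsum⟩
        funext m
        apply Fin.ext
        have := (Finset.sum_eq_sum_iff_of_le (f := fun _ : Fin i => 1)
          (g := fun m => (f m : ℕ)) (fun m _ => hall m)).mp ?_ m (Finset.mem_univ m)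
        · simpa using this.symm
        · simpa using hsum.symm
      · rintro rfl
        exact ⟨fun m => le_refl 1, by simp⟩

/-- The group `Diff_d(1)` of `d`-jets of reparametrizations
`α₁ t + … + α_d t^d` (`α₁ ≠ 0`), acting on `d`-jets of curves by
substitution, embeds into the invertible upper-triangular `d × d` matrices:
the associated matrix (with entries `substEntry α i j`, `1 ≤ i, j ≤ d`) is
upper-triangular with diagonal entries `α₁, α₁², …, α₁^d`, and the
correspondence is a group homomorphism: the matrix of the composed jet
`α ∘ β` (substitution of `β` into `α`, truncated at degree `d`) is the
product of the matrices of `α` and `β`. -/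
theorem stmt_7 (d : ℕ) (hd : 1 ≤ d)
    (α β : ℕ → ℂ)
    (hα0 : α 0 = 0) (hαd : ∀ m, d < m → α m = 0) (hα1 : α 1 ≠ 0)
    (hβ0 : β 0 = 0) (hβd : ∀ m, d < m → β m = 0) (hβ1 : β 1 ≠ 0) :
    (∀ i j : ℕ, j < i → substEntry α i j = 0) ∧
    (∀ i : ℕ, substEntry α i i = (α 1) ^ i) ∧
    (∀ i j : ℕ, 1 ≤ i → i ≤ d → 1 ≤ j → j ≤ d →
      substEntry
        (fun m => ∑ l ∈ Finset.Icc 1 d,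
          α l * PowerSeries.coeff m ((PowerSeries.mk β) ^ l)) i j
      = ∑ s ∈ Finset.Icc 1 d, substEntry α i s * substEntry β s j) := by
  refine ⟨substEntry_triangular α, substEntry_diag α, ?_⟩
  intro i j hi hid hj hjd
  set B : PowerSeries ℂ := PowerSeries.mk β with hB
  have hBc : PowerSeries.constantCoeff B = 0 := by
    simp [hB, hβ0]
  -- the composed jet has zero constant coefficient
  have hγ0 : (∑ l ∈ Finset.Icc 1 d,
      α l * PowerSeries.coeff 0 (B ^ l)) = 0 := by
    apply Finset.sum_eq_zero
    intro l hl
    rw [Finset.mem_Icc] at hl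
    rw [PowerSeries.coeff_zero_eq_constantCoeff, map_pow, hBc,
      zero_pow (by omega : l ≠ 0), mul_zero]
  rw [substEntry_eq_coeff_pow _ hγ0]
  have hmkγ : PowerSeries.mk (fun m => ∑ l ∈ Finset.Icc 1 d,
        α l * PowerSeries.coeff m (B ^ l))
      = ∑ l ∈ Finset.Icc 1 d, PowerSeries.C (α l) * B ^ l := by
    ext m
    rw [PowerSeries.coeff_mk, map_sum]
    simp [PowerSeries.coeff_C_mul]
  rw [hmkγ, sum_C_mul_pow_pow, map_sum]
  simp only [PowerSeries.coeff_C_mul]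
  -- now transform the right-hand side
  have hA : PowerSeries.mk α
      = ∑ l ∈ Finset.Icc 1 d, PowerSeries.C (α l) * PowerSeries.X ^ l :=
    mk_eq_sum_C_mul_X_pow α d hα0 hαd
  have hRHS : ∑ s ∈ Finset.Icc 1 d, substEntry α i s * substEntry β s j
      = ∑ g ∈ Fintype.piFinset (fun _ : Fin i => Finset.Icc 1 d),
          (if (∑ m, g m) ∈ Finset.Icc 1 d then
            (∏ m, α (g m)) * PowerSeries.coeff j (B ^ (∑ m, g m)) else 0) := by
    calc ∑ s ∈ Finset.Icc 1 d, substEntry α i s * substEntry β s j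
        = ∑ s ∈ Finset.Icc 1 d,
            PowerSeries.coeff s ((PowerSeries.mk α) ^ i)
              * PowerSeries.coeff j (B ^ s) := by
          refine Finset.sum_congr rfl (fun s _ => ?_)
          rw [substEntry_eq_coeff_pow α hα0, substEntry_eq_coeff_pow β hβ0]
      _ = ∑ s ∈ Finset.Icc 1 d, ∑ g ∈ Fintype.piFinset (fun _ : Fin i => Finset.Icc 1 d),
            ((∏ m, α (g m)) * (if s = ∑ m, g m then (1:ℂ) else 0))
              * PowerSeries.coeff j (B ^ s) := by
          refine Finset.sum_congr rfl (fun s _ => ?_)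
          rw [hA, sum_C_mul_pow_pow, map_sum, Finset.sum_mul]
          simp only [PowerSeries.coeff_C_mul, PowerSeries.coeff_X_pow]
      _ = _ := by
          rw [Finset.sum_comm]
          refine Finset.sum_congr rfl (fun g _ => ?_)
          simp only [mul_ite, ite_mul, mul_one, mul_zero, zero_mul]
          rw [Finset.sum_ite_eq' (Finset.Icc 1 d) (∑ m, g m)
            (fun s => (∏ m, α (g m)) * PowerSeries.coeff j (B ^ s))]
  rw [hRHS]
  refine Finset.sum_congr rfl (fun g hg => ?_)
  by_cases hmem : (∑ m, g m) ∈ Finset.Icc 1 d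
  · rw [if_pos hmem]
  · rw [if_neg hmem]
    have hge : i ≤ ∑ m, g m := by
      calc i = ∑ _m : Fin i, 1 := by simp
      _ ≤ ∑ m, g m := Finset.sum_le_sum (fun m _ => by
          have := (Fintype.mem_piFinset.mp hg) m
          rw [Finset.mem_Icc] at this
          exact this.1)
    rw [Finset.mem_Icc] at hmem
    have hgt : d < ∑ m, g m := by omega
    rw [coeff_pow_eq_zero_of_lt B hBc (by omega : j < ∑ m, g m), mul_zero]
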